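/- For every nonzero a ∈ F_q[T], say of degree m: (1) the element ψ(a)(t^{−1}) ∈ Q (the evaluation of the polynomial ψ(a) at t^{−1}) is nonzero; set h_a := ψ(a)(t^{−1})^{−1} ∈ Q; (2) h_a ∈ I; (3) if m = 0 then h_a·t^{−1} ∈ R^×; (4) if m ≥ 1 then h_a ∈ R, t^{q^{rm−1}} divides h_a in R, and h_a·f^{E_m} = u·t^{q^{rm}} for some unit u ∈ R^×, where E_m = Σ_{j=0}^{m−1} q^{rj}; (5) the map F_q[T] → Q sending a to ψ(a)(t^{−1}) (and 0 to 0) is injective; (6) for every n ≥ 1, h_a ∈ I^n for all but finitely many nonzero a ∈ F_q[T]. -/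

import Mathlib

noncomputable section

/-- The `i`-fold composite `ψ_T^{∘i}` of a polynomial with itself (`ψ_T^{∘0} = X`). -/
def psiIter {R : Type*} [CommRing R] (psiT : Polynomial R) : ℕ → Polynomial R
  | 0 => Polynomial.X
  | (i + 1) => psiT.comp (psiIter psiT i)

/-- For `a = Σ_i b_i·T^i ∈ F_q[T]`, the polynomial `ψ(a) = Σ_i b_i·ψ_T^{∘i} ∈ R[X]`. -/
def psiOf {Fq : Type*} [Field Fq] [Fintype Fq] {R : Type*} [CommRing R] [Algebra Fq R]
    (psiT : Polynomial R) (a : Polynomial Fq) : Polynomial R :=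
  a.sum fun i b => Polynomial.C (algebraMap Fq R b) * psiIter psiT i

/-- The element `ψ(a)(t^{−1})` of the fraction field `Q` of `R`. -/
def evAt {Fq : Type*} [Field Fq] [Fintype Fq] {R : Type*} [CommRing R] [IsDomain R]
    [Algebra Fq R] (psiT : Polynomial R) (t : R) (a : Polynomial Fq) : FractionRing R :=
  Polynomial.aeval ((algebraMap R (FractionRing R) t)⁻¹) (psiOf psiT a)

lemma aux_geom (x : ℕ) (hx : 1 ≤ x) : ∀ i, (∑ j ∈ Finset.range i, x ^ j) * (x - 1) = x ^ i - 1 := by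
  intro i
  induction i with
  | zero => simp
  | succ i ih =>
    rw [Finset.sum_range_succ, add_mul, ih, Nat.mul_sub, mul_one, ← pow_succ]
    have h1 : 1 ≤ x ^ i := Nat.one_le_pow _ _ hx
    have h2 : x ^ i ≤ x ^ (i+1) := Nat.pow_le_pow_right hx (by omega)
    omega

lemma aux_geom2 (q r : ℕ) (hq : 1 ≤ q) (i : ℕ) :
    (∑ j ∈ Finset.range i, q ^ (r * j)) * (q ^ r - 1) + 1 = q ^ (r * i) := by
  have hg := aux_geom (q ^ r) (Nat.one_le_pow _ _ hq) i
  have hpm : ∀ j, (q ^ r) ^ j = q ^ (r * j) := fun j => by rw [← pow_mul]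
  simp only [hpm] at hg
  rw [hg]
  have : 1 ≤ q ^ (r * i) := Nat.one_le_pow _ _ hq
  omega

lemma aux_ineq (G Qi Ei dd D : ℕ) (h1 : dd ≤ D) (h2 : dd + 1 ≤ G)
    (h3 : Ei * (G - 1) + 1 = Qi) : dd * (1 + Ei * D) ≤ Qi * D := by
  obtain ⟨e, rfl⟩ := Nat.le.dest h1
  obtain ⟨g, hg⟩ := Nat.le.dest h2
  have hG1 : G - 1 = dd + g := by omega
  rw [hG1] at h3
  subst h3
  nlinarith [Nat.zero_le (Ei * g * dd), Nat.zero_le (Ei * g * e), Nat.zero_le e]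

lemma aux_dvd_of_pow_dvd_pow {R : Type*} [CommRing R] [IsDomain R] [IsIntegrallyClosed R]
    {a b : R} {n : ℕ} (hn : n ≠ 0) (ha : a ≠ 0) (h : a ^ n ∣ b ^ n) : a ∣ b := by
  obtain ⟨s, hs⟩ := h
  set K := FractionRing R
  set τ := algebraMap R K with hτ
  have hτinj : Function.Injective τ := IsFractionRing.injective R K
  have hτa : τ a ≠ 0 := fun hh => ha (hτinj (by simpa using hh))
  set z : K := τ b / τ a with hz
  have hzn : z ^ n = τ s := by
    rw [hz, div_pow, ← map_pow, ← map_pow, hs, map_mul, map_pow]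
    rw [mul_div_cancel_left₀ _ (pow_ne_zero _ hτa)]
  have hint : IsIntegral R (z ^ n) := hzn ▸ isIntegral_algebraMap
  obtain ⟨y, hy⟩ := IsIntegrallyClosed.exists_algebraMap_eq_of_isIntegral_pow
    (Nat.pos_of_ne_zero hn) hint
  refine ⟨y, hτinj ?_⟩
  rw [map_mul, hy, hz]
  rw [mul_div_assoc', mul_div_cancel_left₀ _ hτa]


lemma aux_mem_of_pow_mem {R : Type*} [CommRing R] (I : Ideal R) [IsReduced (R ⧸ I)]
    {x : R} {n : ℕ} (hn : n ≠ 0) (h : x ^ n ∈ I) : x ∈ I := by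
  have h0 : (Ideal.Quotient.mk I x) ^ n = 0 := by
    rw [← map_pow]; exact Ideal.Quotient.eq_zero_iff_mem.mpr h
  exact Ideal.Quotient.eq_zero_iff_mem.mp (IsNilpotent.eq_zero ⟨n, h0⟩)

lemma aux_isUnit {R : Type*} [CommRing R] (I : Ideal R) [IsAdicComplete I R]
    {x u : R} (hu : IsUnit u) (h : x - u ∈ I) : IsUnit x := by
  obtain ⟨v, rfl⟩ := hu
  have hj : x - v ∈ Ideal.jacobson (⊥ : Ideal R) := IsAdicComplete.le_jacobson_bot I h
  have h2 := Ideal.mem_jacobson_bot.mp hj ((v⁻¹ : Rˣ) : R)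
  have hx : x = v * ((x - v) * ((v⁻¹ : Rˣ) : R) + 1) := by
    rw [mul_add, mul_one, ← mul_assoc, mul_comm (v : R) ((x : R) - v), mul_assoc]
    simp
  rw [hx]
  exact (Units.isUnit v).mul h2

lemma aux_key {R : Type*} [CommRing R] [IsDomain R]
    (q r : ℕ) (hq : 2 ≤ q) (hr : 1 ≤ r) (ac : ℕ → R)
    (psiT : Polynomial R)
    (hpsiT : psiT = ∑ i ∈ Finset.range (r + 1), Polynomial.C (ac i) * Polynomial.X ^ q ^ i)
    (I : Ideal R) (t : R) (ht0 : t ≠ 0)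
    (c : R) (hcI : c ∈ I) (hfc : ac r * c = t ^ (q ^ (r-1) * (q - 1))) :
    ∀ i : ℕ, ∃ u : R, u - 1 ∈ I ∧
      Polynomial.aeval ((algebraMap R (FractionRing R) t)⁻¹) (psiIter psiT i) *
        (algebraMap R (FractionRing R) t) ^ (q ^ (r * i)) =
      algebraMap R (FractionRing R) (ac r ^ (∑ j ∈ Finset.range i, q ^ (r * j)) * u) := by
  set K := FractionRing R
  set τ := algebraMap R K with hτ
  have hτt : τ t ≠ 0 := (map_ne_zero_iff τ (IsFractionRing.injective R K)).mpr ht0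
  set v : K := (τ t)⁻¹ with hv
  set d : ℕ := q ^ (r-1) * (q - 1) with hd
  have hpred : q ^ (r-1) * q = q ^ r := by rw [← pow_succ]; congr 1; omega
  have hd' : d = q ^ r - q ^ (r-1) := by
    rw [hd, Nat.mul_sub, mul_one, hpred]
  have hone : (1:ℕ) ≤ q ^ (r-1) := Nat.one_le_pow _ _ (by omega)
  have honer : (1:ℕ) ≤ q ^ r := Nat.one_le_pow _ _ (by omega)
  have hprle : q ^ (r-1) ≤ q ^ r := Nat.pow_le_pow_right (by omega) (by omega)
  have hdle : d + 1 ≤ q ^ r := by omega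
  intro i
  induction i with
  | zero =>
    refine ⟨1, by simpa using I.zero_mem, ?_⟩
    simp [psiIter, hv, inv_mul_cancel₀ hτt]
  | succ i ih =>
    obtain ⟨u, huI, heq⟩ := ih
    set E : ℕ := ∑ j ∈ Finset.range i, q ^ (r * j) with hE
    set A : R := ac r ^ E * u with hA
    set W : K := Polynomial.aeval v (psiIter psiT i) with hW
    set M : ℕ → ℕ := fun j => q ^ (r * i) * (q ^ r - q ^ j) with hM
    set N : ℕ → ℕ := fun j => 1 + E * (q ^ r - q ^ j) with hN
    have hEgeom : E * (q ^ r - 1) + 1 = q ^ (r * i) := by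
      have hg := aux_geom (q ^ r) honer i
      have hpm : ∀ j, (q ^ r) ^ j = q ^ (r * j) := fun j => by rw [← pow_mul]
      simp only [hpm] at hg
      rw [hE, hg]
      have : 1 ≤ q ^ (r * i) := Nat.one_le_pow _ _ (by omega)
      omega
    have hE' : (∑ j ∈ Finset.range (i+1), q ^ (r * j)) = E * q ^ r + 1 := by
      rw [Finset.sum_range_succ']
      simp only [mul_zero, pow_zero]
      congr 1
      rw [hE, Finset.sum_mul]
      exact Finset.sum_congr rfl fun j _ => by rw [← pow_add]; congr 1
    have hjler : ∀ j, j ≤ r → q ^ j ≤ q ^ r := fun j hj => Nat.pow_le_pow_right (by omega) hj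
    have ha : ∀ j, j ≤ r → q ^ (r * i) * q ^ j + M j = q ^ (r * (i+1)) := by
      intro j hj
      simp only [hM]
      rw [← Nat.mul_add, Nat.add_sub_cancel' (hjler j hj), ← pow_add]
      congr 1
    have hb : ∀ j, j ≤ r → E * q ^ j + N j = E * q ^ r + 1 := by
      intro j hj
      have h1 : q ^ j ≤ q ^ r := hjler j hj
      have h2 : E * q ^ j + E * (q ^ r - q ^ j) = E * q ^ r := by
        rw [← Nat.mul_add, Nat.add_sub_cancel' h1]
      simp only [hN]
      omega
    have hMd : ∀ j, j < r → d * N j ≤ M j := by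
      intro j hj
      have hjr1 : q ^ j ≤ q ^ (r-1) := Nat.pow_le_pow_right (by omega) (by omega)
      have h1 : d ≤ q ^ r - q ^ j := by omega
      have h2 := aux_ineq (q ^ r) (q ^ (r*i)) E d (q ^ r - q ^ j) h1 hdle hEgeom
      simpa [hM, hN] using h2
    set u' : R := u ^ (q ^ r) +
      ∑ j ∈ Finset.range r, ac j * u ^ (q ^ j) * c ^ (N j) * t ^ (M j - d * N j) with hu'
    have hu'I : u' - 1 ∈ I := by
      have h1 : u ^ (q ^ r) - 1 ∈ I := by
        have hmk : Ideal.Quotient.mk I u = 1 := by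
          have := Ideal.Quotient.eq_zero_iff_mem.mpr huI
          rw [map_sub, map_one, sub_eq_zero] at this
          exact this
        rw [← Ideal.Quotient.eq_zero_iff_mem, map_sub, map_pow, hmk, one_pow, map_one, sub_self]
      have h2 : (∑ j ∈ Finset.range r, ac j * u ^ (q ^ j) * c ^ (N j) * t ^ (M j - d * N j)) ∈ I := by
        refine Ideal.sum_mem I fun j _ => ?_
        refine I.mul_mem_right _ (I.mul_mem_left _ ?_)
        exact I.pow_mem_of_mem hcI _ (by simp [hN])
      have : u' - 1 = (u ^ (q ^ r) - 1) +
          ∑ j ∈ Finset.range r, ac j * u ^ (q ^ j) * c ^ (N j) * t ^ (M j - d * N j) := by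
        rw [hu']; ring
      rw [this]
      exact I.add_mem h1 h2
    refine ⟨u', hu'I, ?_⟩
    have hRid : (∑ j ∈ Finset.range (r+1), ac j * (A ^ (q ^ j) * t ^ (M j))) =
        ac r ^ (E * q ^ r + 1) * u' := by
      rw [Finset.sum_range_succ]
      have hlast : ac r * (A ^ (q ^ r) * t ^ (M r)) = ac r ^ (E * q ^ r + 1) * u ^ (q ^ r) := by
        have hMr : M r = 0 := by simp [hM]
        rw [hMr, pow_zero, mul_one, hA, mul_pow, ← pow_mul]
        ring
      have hterm : ∀ j ∈ Finset.range r, ac j * (A ^ (q ^ j) * t ^ (M j)) =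
          ac r ^ (E * q ^ r + 1) * (ac j * u ^ (q ^ j) * c ^ (N j) * t ^ (M j - d * N j)) := by
        intro j hj
        have hj' : j < r := Finset.mem_range.mp hj
        have h1 : t ^ (M j) = ac r ^ (N j) * c ^ (N j) * t ^ (M j - d * N j) := by
          rw [← mul_pow, hfc, ← pow_mul, ← pow_add]
          congr 1
          have := hMd j hj'
          omega
        rw [hA, mul_pow, ← pow_mul, h1, ← hb j (le_of_lt hj')]
        ring
      rw [Finset.sum_congr rfl hterm, ← Finset.mul_sum, hlast, hu', mul_add, add_comm]
    have hcomp : Polynomial.aeval v (psiIter psiT (i+1)) = Polynomial.aeval W psiT := by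
      show Polynomial.aeval v ((psiT).comp (psiIter psiT i)) = _
      rw [Polynomial.aeval_comp]
    rw [hcomp, hpsiT, map_sum]
    simp only [map_mul, map_pow, Polynomial.aeval_C, Polynomial.aeval_X]
    rw [Finset.sum_mul]
    have hWj : ∀ j ∈ Finset.range (r+1),
        τ (ac j) * W ^ (q ^ j) * (τ t) ^ (q ^ (r*(i+1))) = τ (ac j * (A ^ (q ^ j) * t ^ (M j))) := by
      intro j hj
      have hj' : j ≤ r := by have := Finset.mem_range.mp hj; omega
      have hT : (τ t) ^ (q ^ (r*(i+1))) = ((τ t) ^ (q ^ (r*i))) ^ (q ^ j) * (τ t) ^ (M j) := by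
        rw [← pow_mul, ← pow_add, ha j hj']
      rw [hT, map_mul, map_mul, map_pow, map_pow, ← heq]
      ring
    rw [Finset.sum_congr rfl hWj, ← map_sum, hE', ← map_pow, ← map_mul]
    exact congrArg τ hRid

lemma aux_main {Fq : Type*} [Field Fq] [Fintype Fq] {R : Type*} [CommRing R] [IsDomain R]
    [Algebra Fq R]
    (r : ℕ) (hr : 1 ≤ r) (ac : ℕ → R) (psiT : Polynomial R)
    (I : Ideal R) [IsAdicComplete I R] (t : R) (ht0 : t ≠ 0)
    (c : R) (hcI : c ∈ I)
    (hfc : ac r * c = t ^ ((Fintype.card Fq) ^ (r-1) * (Fintype.card Fq - 1)))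
    (hkey : ∀ i : ℕ, ∃ u : R, u - 1 ∈ I ∧
      Polynomial.aeval ((algebraMap R (FractionRing R) t)⁻¹) (psiIter psiT i) *
        (algebraMap R (FractionRing R) t) ^ ((Fintype.card Fq) ^ (r * i)) =
      algebraMap R (FractionRing R)
        (ac r ^ (∑ j ∈ Finset.range i, (Fintype.card Fq) ^ (r * j)) * u))
    (a : Polynomial Fq) (ha : a ≠ 0) :
    ∃ U : R, IsUnit U ∧
      evAt psiT t a * (algebraMap R (FractionRing R) t) ^
          ((Fintype.card Fq) ^ (r * a.natDegree)) =
      algebraMap R (FractionRing R)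
        (ac r ^ (∑ j ∈ Finset.range a.natDegree, (Fintype.card Fq) ^ (r * j)) * U) := by
  classical
  set q : ℕ := Fintype.card Fq with hqdef
  have hq : 2 ≤ q := Fintype.one_lt_card
  set d : ℕ := q ^ (r-1) * (q - 1) with hd
  set E : ℕ → ℕ := fun i => ∑ j ∈ Finset.range i, q ^ (r * j) with hE
  set m := a.natDegree with hm
  choose u huI hueq using hkey
  have hueq' : ∀ i : ℕ,
      Polynomial.aeval ((algebraMap R (FractionRing R) t)⁻¹) (psiIter psiT i) *
        (algebraMap R (FractionRing R) t) ^ (q ^ (r * i)) =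
      algebraMap R (FractionRing R) (ac r ^ (E i) * u i) := hueq
  -- numerics
  have honer : (1:ℕ) ≤ q ^ r := Nat.one_le_pow _ _ (by omega)
  have hdle : d ≤ q ^ r - 1 := by
    have hpred : q ^ (r-1) * q = q ^ r := by rw [← pow_succ]; congr 1; omega
    have h1 : q ^ (r-1) * (q-1) = q ^ r - q ^ (r-1) := by rw [Nat.mul_sub, mul_one, hpred]
    have hone : (1:ℕ) ≤ q ^ (r-1) := Nat.one_le_pow _ _ (by omega)
    omega
  have hEmono : ∀ i, i ≤ m → E i ≤ E m := by
    intro i hi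
    exact Finset.sum_le_sum_of_subset (Finset.range_subset_range.mpr hi)
  have hEstrict : ∀ i, i < m → E i < E m := by
    intro i hi
    have h1 : E (i+1) ≤ E m := hEmono _ (by omega)
    have h2 : E i + q ^ (r * i) = E (i+1) := by
      simp only [hE]; rw [Finset.sum_range_succ]
    have h3 : 1 ≤ q ^ (r * i) := Nat.one_le_pow _ _ (by omega)
    omega
  have hQle : ∀ i, i ≤ m → q ^ (r * i) ≤ q ^ (r * m) :=
    fun i hi => Nat.pow_le_pow_right (by omega) (Nat.mul_le_mul_left r hi)
  have hPk : ∀ i, i ≤ m → (E m - E i) * (q ^ r - 1) = q ^ (r * m) - q ^ (r * i) := by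
    intro i hi
    have h4 : E m * (q ^ r - 1) + 1 = q ^ (r * m) := aux_geom2 q r (by omega) m
    have h5 : E i * (q ^ r - 1) + 1 = q ^ (r * i) := aux_geom2 q r (by omega) i
    rw [Nat.sub_mul]
    generalize E m * (q ^ r - 1) = A at h4 ⊢
    generalize E i * (q ^ r - 1) = B at h5 ⊢
    omega
  have hdk : ∀ i, i ≤ m → d * (E m - E i) ≤ q ^ (r * m) - q ^ (r * i) := by
    intro i hi
    calc d * (E m - E i) ≤ (q ^ r - 1) * (E m - E i) := Nat.mul_le_mul_right _ hdle
    _ = q ^ (r * m) - q ^ (r * i) := by rw [mul_comm]; exact hPk i hi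
  -- definitions
  set P : ℕ → ℕ := fun i => q ^ (r * m) - q ^ (r * i) with hP
  set k : ℕ → ℕ := fun i => E m - E i with hk
  set z : ℕ → R := fun i => c ^ (k i) * t ^ (P i - d * (k i)) with hz
  set U : R := ∑ i ∈ a.support, algebraMap Fq R (a.coeff i) * u i * z i with hU
  -- the per-term identity in R
  have hα : ∀ i ∈ a.support,
      algebraMap Fq R (a.coeff i) * (ac r ^ (E i) * u i) * t ^ (P i) =
      ac r ^ (E m) * (algebraMap Fq R (a.coeff i) * u i * z i) := by
    intro i hi
    have him : i ≤ m := Polynomial.le_natDegree_of_mem_supp i hi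
    have h1 : t ^ (P i) = ac r ^ (k i) * c ^ (k i) * t ^ (P i - d * (k i)) := by
      rw [← mul_pow, hfc, ← pow_mul, ← pow_add]
      congr 1
      have := hdk i him
      simp only [hP, hk]
      omega
    have h2 : E i + k i = E m := by
      simp only [hk]
      have := hEmono i him
      omega
    rw [h1, ← h2, pow_add, hz]
    ring
  -- evAt computation
  have hev : evAt psiT t a * (algebraMap R (FractionRing R) t) ^ (q ^ (r * m)) =
      algebraMap R (FractionRing R) (∑ i ∈ a.support,
        algebraMap Fq R (a.coeff i) * (ac r ^ (E i) * u i) * t ^ (P i)) := by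
    rw [evAt, psiOf, Polynomial.sum_def, map_sum, Finset.sum_mul, map_sum]
    refine Finset.sum_congr rfl fun i hi => ?_
    have him : i ≤ m := Polynomial.le_natDegree_of_mem_supp i hi
    have hT : (algebraMap R (FractionRing R) t) ^ (q ^ (r * m)) =
        (algebraMap R (FractionRing R) t) ^ (q ^ (r * i)) *
        (algebraMap R (FractionRing R) t) ^ (P i) := by
      rw [← pow_add]
      congr 1
      have := hQle i him
      simp only [hP]
      omega
    rw [map_mul, Polynomial.aeval_C, hT,
      map_mul (algebraMap R (FractionRing R)), map_mul (algebraMap R (FractionRing R)),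
      map_pow (algebraMap R (FractionRing R)) t, ← hueq' i]
    ring
  have hGU : (∑ i ∈ a.support,
      algebraMap Fq R (a.coeff i) * (ac r ^ (E i) * u i) * t ^ (P i)) =
      ac r ^ (E m) * U := by
    rw [hU, Finset.mul_sum]
    exact Finset.sum_congr rfl hα
  -- U is a unit
  have hmem : m ∈ a.support := Polynomial.natDegree_mem_support_of_nonzero ha
  have hUunit : IsUnit U := by
    have hzm : z m = 1 := by
      simp only [hz, hk, hP]
      simp
    have hsplit : algebraMap Fq R (a.coeff m) * u m * z m +
        ∑ i ∈ a.support.erase m, algebraMap Fq R (a.coeff i) * u i * z i = U := by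
      rw [hU]
      exact Finset.add_sum_erase _ (fun i => algebraMap Fq R (a.coeff i) * u i * z i) hmem
    have hrest : (∑ i ∈ a.support.erase m,
        algebraMap Fq R (a.coeff i) * u i * z i) ∈ I := by
      refine Ideal.sum_mem I fun i hi => ?_
      have hi' : i ∈ a.support := Finset.mem_of_mem_erase hi
      have hine : i ≠ m := Finset.ne_of_mem_erase hi
      have him : i < m := lt_of_le_of_ne (Polynomial.le_natDegree_of_mem_supp i hi') hine
      have hki : 0 < k i := by
        simp only [hk]
        have := hEstrict i him
        omega
      refine I.mul_mem_left _ ?_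
      simp only [hz]
      exact I.mul_mem_right _ (I.pow_mem_of_mem hcI _ hki)
    have hbm : IsUnit (algebraMap Fq R (a.coeff m)) := by
      have h0 : a.coeff m ≠ 0 := by
        rw [hm]
        exact Polynomial.leadingCoeff_ne_zero.mpr ha
      exact (isUnit_iff_ne_zero.mpr h0).map (algebraMap Fq R)
    have hum : IsUnit (u m) := aux_isUnit I isUnit_one (by simpa using huI m)
    refine aux_isUnit I (hbm.mul hum) ?_
    have hUs : U - algebraMap Fq R (a.coeff m) * u m =
        ∑ i ∈ a.support.erase m, algebraMap Fq R (a.coeff i) * u i * z i := by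
      rw [← hsplit, hzm, mul_one]
      ring
    rw [hUs]
    exact hrest
  exact ⟨U, hUunit, by rw [hev, hGU]⟩


lemma aux_finite {Fq : Type*} [Field Fq] [Fintype Fq] (n : ℕ) :
    {a : Polynomial Fq | a.natDegree ≤ n}.Finite := by
  classical
  have hinj : Set.InjOn (fun (a : Polynomial Fq) (i : Fin (n+1)) => a.coeff i)
      {a | a.natDegree ≤ n} := by
    intro x hx y hy h
    ext j
    rcases le_or_gt j n with hj | hj
    · exact congrFun h ⟨j, by omega⟩
    · rw [Polynomial.coeff_eq_zero_of_natDegree_lt (lt_of_le_of_lt hx hj),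
        Polynomial.coeff_eq_zero_of_natDegree_lt (lt_of_le_of_lt hy hj)]
  exact Set.Finite.of_finite_image (Set.toFinite _) hinj

/-- Let `R` be an integrally closed domain which is an `F_q[T]`-algebra,
`ψ_T = Σ_{i=0}^r a_i·X^{q^i}` with `a_0` the image of `T` and `f := a_r ≠ 0`, let `I` be an
ideal with `R` `I`-adically complete and `R/I` reduced, and let `t ∈ I` be nonzero with
`f^q ∣ t^{(q^r−1)(q−1)}`.  Then, with `h_a := ψ(a)(t^{−1})^{−1} ∈ Q = Frac(R)`:
the map `a ↦ ψ(a)(t^{−1})` is injective; for nonzero `a` of degree `m`: `ψ(a)(t^{−1}) ≠ 0`,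
`h_a ∈ I`, if `m = 0` then `h_a·t^{−1} ∈ R^×`, if `m ≥ 1` then `h_a ∈ R`,
`t^{q^{rm−1}} ∣ h_a` and `h_a·f^{E_m} = u·t^{q^{rm}}` for a unit `u`; and for every `n ≥ 1`,
`h_a ∈ I^n` for all but finitely many nonzero `a`. -/
theorem statement17 {Fq : Type*} [Field Fq] [Fintype Fq]
    {R : Type*} [CommRing R] [IsDomain R] [IsIntegrallyClosed R]
    [Algebra Fq R] [Algebra (Polynomial Fq) R] [IsScalarTower Fq (Polynomial Fq) R]
    (r : ℕ) (hr : 1 ≤ r) (ac : ℕ → R)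
    (ha0 : ac 0 = algebraMap (Polynomial Fq) R Polynomial.X)
    (psiT : Polynomial R)
    (hpsiT : psiT = ∑ i ∈ Finset.range (r + 1),
      Polynomial.C (ac i) * Polynomial.X ^ (Fintype.card Fq) ^ i)
    (I : Ideal R) [IsAdicComplete I R] [IsReduced (R ⧸ I)]
    (hf : ac r ≠ 0)
    (t : R) (ht0 : t ≠ 0) (htI : t ∈ I)
    (hdvd : (ac r) ^ (Fintype.card Fq) ∣
      t ^ (((Fintype.card Fq) ^ r - 1) * (Fintype.card Fq - 1))) :
    Function.Injective (fun a : Polynomial Fq => evAt psiT t a) ∧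
    (∀ a : Polynomial Fq, a ≠ 0 →
      (evAt psiT t a ≠ 0) ∧
      (∃ x ∈ I, algebraMap R (FractionRing R) x = (evAt psiT t a)⁻¹) ∧
      (a.natDegree = 0 →
        ∃ u : Rˣ, (evAt psiT t a)⁻¹ = algebraMap R (FractionRing R) ((u : R) * t)) ∧
      (1 ≤ a.natDegree →
        ∃ x : R, algebraMap R (FractionRing R) x = (evAt psiT t a)⁻¹ ∧
          t ^ ((Fintype.card Fq) ^ (r * a.natDegree - 1)) ∣ x ∧
          ∃ u : Rˣ,
            x * (ac r) ^ (∑ j ∈ Finset.range a.natDegree, (Fintype.card Fq) ^ (r * j)) =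
              (u : R) * t ^ ((Fintype.card Fq) ^ (r * a.natDegree)))) ∧
    (∀ n : ℕ, 1 ≤ n →
      {a : Polynomial Fq | a ≠ 0 ∧
        ¬ ∃ x ∈ I ^ n, algebraMap R (FractionRing R) x = (evAt psiT t a)⁻¹}.Finite) := by
  classical
  set q : ℕ := Fintype.card Fq with hqdef
  have hq : 2 ≤ q := Fintype.one_lt_card
  have hq0 : q ≠ 0 := by omega
  have hdvd' : ac r ^ q ∣ t ^ ((q ^ r - 1) * (q - 1)) := hdvd
  have hpred : q ^ (r-1) * q = q ^ r := by rw [← pow_succ]; congr 1; omega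
  have honer : (1:ℕ) ≤ q ^ r := Nat.one_le_pow _ _ (by omega)
  have hdq : (q ^ (r-1) * (q-1)) * q = (q ^ r - 1) * (q - 1) + (q - 1) := by
    have h1 : (q ^ (r-1) * (q-1)) * q = q ^ r * (q - 1) := by
      rw [mul_right_comm, hpred]
    have h2 : (q ^ r - 1) * (q - 1) + (q - 1) = q ^ r * (q - 1) := by
      rw [Nat.sub_mul, one_mul]
      have h3 : q - 1 ≤ q ^ r * (q - 1) := Nat.le_mul_of_pos_left _ (by omega)
      omega
    omega
  have hfq : ac r ^ q ∣ (t ^ (q ^ (r-1) * (q-1))) ^ q := by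
    rw [← pow_mul, hdq, pow_add]
    exact Dvd.dvd.mul_right hdvd' _
  have hfdvd : ac r ∣ t ^ (q ^ (r-1) * (q-1)) := aux_dvd_of_pow_dvd_pow hq0 hf hfq
  obtain ⟨c, hfc⟩ := hfdvd
  obtain ⟨s, hs⟩ := hdvd'
  have hcq : c ^ q = s * t ^ (q - 1) := by
    have hcancel : ac r ^ q * c ^ q = ac r ^ q * (s * t ^ (q-1)) := by
      rw [← mul_pow, ← hfc, ← pow_mul, hdq, pow_add, hs]
      ring
    exact mul_left_cancel₀ (pow_ne_zero _ hf) hcancel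
  have hcI : c ∈ I := by
    apply aux_mem_of_pow_mem I hq0
    rw [hcq]
    exact I.mul_mem_left _ (I.pow_mem_of_mem htI _ (by omega))
  have hfc' : ac r * c = t ^ (q ^ (r-1) * (q-1)) := hfc.symm
  have hkey := aux_key q r hq hr ac psiT hpsiT I t ht0 c hcI hfc'
  have hmain : ∀ a : Polynomial Fq, a ≠ 0 → ∃ U : R, IsUnit U ∧
      evAt psiT t a * (algebraMap R (FractionRing R) t) ^ (q ^ (r * a.natDegree)) =
      algebraMap R (FractionRing R)
        (ac r ^ (∑ j ∈ Finset.range a.natDegree, q ^ (r * j)) * U) :=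
    fun a ha => aux_main r hr ac psiT I t ht0 c hcI hfc' hkey a ha
  have hτinj : Function.Injective (algebraMap R (FractionRing R)) :=
    IsFractionRing.injective R (FractionRing R)
  have hτt : algebraMap R (FractionRing R) t ≠ 0 := (map_ne_zero_iff _ hτinj).mpr ht0
  have hne : ∀ a : Polynomial Fq, a ≠ 0 → evAt psiT t a ≠ 0 := by
    intro a ha he
    obtain ⟨U, hUu, heq⟩ := hmain a ha
    rw [he, zero_mul] at heq
    have hzz : ac r ^ (∑ j ∈ Finset.range a.natDegree, q ^ (r*j)) * U ≠ 0 :=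
      mul_ne_zero (pow_ne_zero _ hf) hUu.ne_zero
    exact hzz (hτinj (by rw [map_zero]; exact heq.symm))
  -- the main package for each nonzero a
  have pack : ∀ a : Polynomial Fq, a ≠ 0 → ∃ x : R,
      algebraMap R (FractionRing R) x = (evAt psiT t a)⁻¹ ∧ x ∈ I ∧
      (a.natDegree = 0 → ∃ u : Rˣ, x = (u : R) * t) ∧
      (1 ≤ a.natDegree → t ^ (q ^ (r * a.natDegree - 1)) ∣ x ∧
        ∃ u : Rˣ, x * ac r ^ (∑ j ∈ Finset.range a.natDegree, q ^ (r * j)) =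
          (u : R) * t ^ (q ^ (r * a.natDegree))) ∧
      (∀ n : ℕ, n ≤ q ^ (r * a.natDegree - 1) → 1 ≤ a.natDegree → x ∈ I ^ n) := by
    intro a ha
    obtain ⟨U, hUu, heq⟩ := hmain a ha
    obtain ⟨Uu, rfl⟩ := hUu
    set U : R := (Uu : R) with hUdef
    set m := a.natDegree with hm
    set Em : ℕ := ∑ j ∈ Finset.range m, q ^ (r * j) with hEm
    have hUU : ((Uu⁻¹ : Rˣ) : R) * U = 1 := Units.inv_mul _
    have hInv : ∀ x : R, x * (ac r ^ Em * U) = t ^ (q ^ (r * m)) →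
        algebraMap R (FractionRing R) x = (evAt psiT t a)⁻¹ := by
      intro x hx
      have h2 : (evAt psiT t a * algebraMap R (FractionRing R) x) *
          (algebraMap R (FractionRing R) t) ^ (q ^ (r * m)) =
          1 * (algebraMap R (FractionRing R) t) ^ (q ^ (r * m)) := by
        rw [one_mul, mul_right_comm, heq, ← map_mul,
          mul_comm (ac r ^ Em * U) x, hx, map_pow]
      have h1 : evAt psiT t a * algebraMap R (FractionRing R) x = 1 :=
        mul_right_cancel₀ (pow_ne_zero _ hτt) h2
      exact (inv_eq_of_mul_eq_one_right h1).symm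
    rcases Nat.eq_zero_or_pos m with hm0 | hm1
    · -- degree zero
      have hEm0 : Em = 0 := by rw [hEm, hm0]; simp
      set x : R := ((Uu⁻¹ : Rˣ) : R) * t with hxdef
      have hx : x * (ac r ^ Em * U) = t ^ (q ^ (r * m)) := by
        rw [hEm0, pow_zero, one_mul, hm0, mul_zero, pow_zero, pow_one, hxdef,
          mul_right_comm, hUU, one_mul]
      refine ⟨x, hInv x hx, I.mul_mem_left _ htI, fun _ => ⟨Uu⁻¹, rfl⟩,
        fun h1 => absurd h1 (by omega), fun n hn h1 => absurd h1 (by omega)⟩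
    · -- degree at least one
      have hrm : 1 ≤ r * m := Nat.mul_le_mul hr hm1
      have hg : Em * (q ^ r - 1) + 1 = q ^ (r * m) := aux_geom2 q r (by omega) m
      have h3 : q ^ (r*m-1) * q = q ^ (r*m) := by rw [← pow_succ]; congr 1; omega
      have hydvd : ac r ^ Em ∣ t ^ (q ^ (r*m-1) * (q-1)) := by
        apply aux_dvd_of_pow_dvd_pow hq0 (pow_ne_zero _ hf)
        have h1 : (ac r ^ Em) ^ q = (ac r ^ q) ^ Em := by
          rw [← pow_mul, ← pow_mul, mul_comm]
        rw [h1, ← pow_mul, ← pow_mul]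
        have h2' : ac r ^ (q * Em) ∣ t ^ ((q ^ r - 1)*(q-1) * Em) := by
          rw [pow_mul, pow_mul]
          exact pow_dvd_pow_of_dvd ⟨s, hs⟩ Em
        refine dvd_trans h2' (pow_dvd_pow t ?_)
        calc (q ^ r - 1)*(q-1)*Em = (Em * (q ^ r - 1))*(q-1) := by ring
        _ ≤ (q ^ (r*m)) * (q-1) := Nat.mul_le_mul_right _ (by omega)
        _ = q ^ (r*m-1) * (q-1) * q := by rw [← h3]; ring
      obtain ⟨y, hy⟩ := hydvd
      set x : R := y * ((Uu⁻¹ : Rˣ) : R) * t ^ (q ^ (r*m - 1)) with hxdef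
      have hexp : q ^ (r*m-1)*(q-1) + q ^ (r*m-1) = q ^ (r*m) := by
        have h4 : (q-1) + 1 = q := by omega
        calc q ^ (r*m-1)*(q-1) + q ^ (r*m-1) = q ^ (r*m-1)*((q-1)+1) := by ring
        _ = q ^ (r*m) := by rw [h4, h3]
      have hxE : x * ac r ^ Em = ((Uu⁻¹ : Rˣ) : R) * t ^ (q ^ (r*m)) := by
        calc x * ac r ^ Em
            = (ac r ^ Em * y) * ((Uu⁻¹ : Rˣ) : R) * t ^ (q ^ (r*m-1)) := by
              rw [hxdef]; ring
          _ = ((Uu⁻¹ : Rˣ) : R) *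
              (t ^ (q ^ (r*m-1)*(q-1)) * t ^ (q ^ (r*m-1))) := by rw [← hy]; ring
          _ = ((Uu⁻¹ : Rˣ) : R) * t ^ (q ^ (r*m)) := by rw [← pow_add, hexp]
      have hx : x * (ac r ^ Em * U) = t ^ (q ^ (r * m)) := by
        calc x * (ac r ^ Em * U) = (x * ac r ^ Em) * U := by ring
        _ = ((Uu⁻¹ : Rˣ) : R) * t ^ (q ^ (r*m)) * U := by rw [hxE]
        _ = (((Uu⁻¹ : Rˣ) : R) * U) * t ^ (q ^ (r*m)) := by ring
        _ = t ^ (q ^ (r*m)) := by rw [hUU, one_mul]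
      have hpos : 0 < q ^ (r*m-1) := Nat.pow_pos (by omega)
      refine ⟨x, hInv x hx, ?_, fun h0 => absurd h0 (by omega),
        fun _ => ⟨dvd_mul_left _ _, ⟨Uu⁻¹, hxE⟩⟩, ?_⟩
      · rw [hxdef]
        exact I.mul_mem_left _ (I.pow_mem_of_mem htI _ hpos)
      · intro n hn _
        have h5 : t ^ (q ^ (r*m-1)) ∈ I ^ (q ^ (r*m-1)) := Ideal.pow_mem_pow htI _
        have h6 : I ^ (q ^ (r*m-1)) ≤ I ^ n := Ideal.pow_le_pow_right hn
        exact (I ^ n).mul_mem_left _ (h6 h5)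
  -- additivity and injectivity
  have hadd : ∀ x y : Polynomial Fq,
      evAt psiT t (x + y) = evAt psiT t x + evAt psiT t y := by
    intro x y
    rw [evAt, evAt, evAt, psiOf, psiOf, psiOf, Polynomial.sum_add_index, map_add]
    · intro i
      rw [map_zero, Polynomial.C_0, zero_mul]
    · intro i b1 b2
      rw [map_add, Polynomial.C_add, add_mul]
  refine ⟨?_, ?_, ?_⟩
  · intro a b hab
    have hab' : evAt psiT t a = evAt psiT t b := hab
    by_contra hne'
    have hsub : a - b ≠ 0 := sub_ne_zero.mpr hne'
    have h1 : evAt psiT t (a - b) + evAt psiT t b = evAt psiT t a := by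
      rw [← hadd, sub_add_cancel]
    have h3 : evAt psiT t (a - b) + evAt psiT t b = 0 + evAt psiT t b := by
      rw [zero_add, h1, hab']
    exact hne (a - b) hsub (add_right_cancel h3)
  · intro a ha
    obtain ⟨x, hxinv, hxI, h0, h1, _⟩ := pack a ha
    refine ⟨hne a ha, ⟨x, hxI, hxinv⟩, ?_, ?_⟩
    · intro hdeg0
      obtain ⟨u, hu⟩ := h0 hdeg0
      exact ⟨u, by rw [← hxinv, hu]⟩
    · intro hdeg1
      exact ⟨x, hxinv, (h1 hdeg1).1, (h1 hdeg1).2⟩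
  · intro n hn
    apply Set.Finite.subset (aux_finite (Fq := Fq) n)
    intro a haa
    simp only [Set.mem_setOf_eq] at haa ⊢
    by_contra hdeg
    push_neg at hdeg
    obtain ⟨x, hxinv, hxI, h0, h1, hIn⟩ := pack a haa.1
    apply haa.2
    refine ⟨x, ?_, hxinv⟩
    have hm1 : 1 ≤ a.natDegree := by omega
    apply hIn n ?_ hm1
    have hd1 : a.natDegree ≤ 2 ^ (a.natDegree - 1) := by
      have := @Nat.lt_two_pow_self (a.natDegree - 1)
      omega
    have h2q : 2 ^ (r * a.natDegree - 1) ≤ q ^ (r * a.natDegree - 1) :=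
      Nat.pow_le_pow_left hq _
    have hmm : a.natDegree - 1 ≤ r * a.natDegree - 1 := by
      have := Nat.le_mul_of_pos_left a.natDegree (show 0 < r by omega)
      omega
    have h2mono : 2 ^ (a.natDegree - 1) ≤ 2 ^ (r * a.natDegree - 1) :=
      Nat.pow_le_pow_right (by omega) hmm
    omega
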